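/- Let p be prime, s ≥ 3, and let S(q) denote the number of solutions (x1,...,xs) modulo q of the simultaneous congruences λ1x1² + ... + λsxs² ≡ 0 and λ1x1 + ... + λsxs ≡ 0 (mod q). With V(q) as the normalized complete exponential sum q^{−s} Σ_{gcd(a1,a2,q)=1} Π_i V(q, λ_i a1, λ_i a2), one has for every k ≥ 0 the identity Σ_{l=0}^{k} V(p^l) = p^{(2−s)k} S(p^k). -/

import Mathlib

open Finset Complex

noncomputable def Vloc10 (q : ℕ) (b1 b2 : ℤ) : ℂ :=
  ∑ r ∈ Finset.Icc 1 q,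
    Complex.exp (2 * Real.pi * Complex.I * (((b2 * r ^ 2 + b1 * r : ℤ) : ℝ) / q))

noncomputable def Vnorm10 (s : ℕ) (lam : Fin s → ℤ) (q : ℕ) : ℂ :=
  (q : ℂ) ^ (-(s : ℤ)) *
    ∑ a ∈ (Finset.Icc 1 q ×ˢ Finset.Icc 1 q).filter
        (fun a => Nat.gcd a.1 (Nat.gcd a.2 q) = 1),
      ∏ i, Vloc10 q (lam i * a.1) (lam i * a.2)

noncomputable def eC (q : ℕ) (c : ℤ) : ℂ :=
  Complex.exp (2 * Real.pi * Complex.I * ((c : ℝ) / q))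

lemma eC_add (q : ℕ) (c d : ℤ) : eC q (c + d) = eC q c * eC q d := by
  rw [eC, eC, eC, ← Complex.exp_add]
  congr 1
  push_cast
  ring

lemma eC_nat_mul (q : ℕ) (a : ℕ) (c : ℤ) : eC q (a * c) = eC q c ^ a := by
  rw [eC, eC, ← Complex.exp_nat_mul]
  congr 1
  push_cast
  ring

lemma eC_int_mul (q : ℕ) (m : ℤ) : eC q ((q : ℤ) * m) = 1 := by
  rcases Nat.eq_zero_or_pos q with h | h
  · simp [eC, h]
  · rw [eC]
    have hq : (q : ℂ) ≠ 0 := Nat.cast_ne_zero.2 h.ne'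
    have : 2 * (Real.pi : ℂ) * Complex.I * ((((q : ℤ) * m : ℤ) : ℝ) / q) = m * (2 * Real.pi * Complex.I) := by
      push_cast
      field_simp
    rw [this, Complex.exp_int_mul_two_pi_mul_I]

lemma eC_eq_one_iff (q : ℕ) (hq : 0 < q) (c : ℤ) : eC q c = 1 ↔ (q : ℤ) ∣ c := by
  constructor
  · intro h
    rw [eC, Complex.exp_eq_one_iff] at h
    obtain ⟨n, hn⟩ := h
    have hq' : (q : ℂ) ≠ 0 := Nat.cast_ne_zero.2 hq.ne'
    have h2 : (2 * (Real.pi : ℂ) * Complex.I) ≠ 0 := by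
      simp [Real.pi_ne_zero, Complex.I_ne_zero]
    refine ⟨n, ?_⟩
    have hdiv : ((c : ℝ) : ℂ) / q = n := by
      have := hn
      rw [mul_comm (n:ℂ) (2 * Real.pi * Complex.I)] at this
      exact mul_left_cancel₀ h2 this
    have : (c : ℂ) = (q : ℂ) * n := by
      push_cast at hdiv ⊢
      field_simp at hdiv
      linear_combination hdiv
    exact_mod_cast this
  · rintro ⟨m, rfl⟩
    exact eC_int_mul q m

lemma sum_eC (q : ℕ) (hq : 0 < q) (c : ℤ) :
    ∑ a ∈ Finset.range q, eC q ((a : ℤ) * c) = if (q : ℤ) ∣ c then (q : ℂ) else 0 := by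
  have hterm : ∀ a : ℕ, eC q ((a : ℤ) * c) = eC q c ^ a := fun a => eC_nat_mul q a c
  by_cases h : (q : ℤ) ∣ c
  · have h1 : eC q c = 1 := (eC_eq_one_iff q hq c).2 h
    simp [hterm, h1, h]
  · have h1 : eC q c ≠ 1 := fun hc => h ((eC_eq_one_iff q hq c).1 hc)
    have hpow : eC q c ^ q = 1 := by
      rw [← eC_nat_mul]
      exact eC_int_mul q c
    rw [if_neg h]
    have := geom_sum_eq h1 q
    simp only [hterm]
    rw [this, hpow]
    simp

lemma sum_Icc_eq_range (q : ℕ) (f : ℕ → ℂ) (h : f q = f 0) :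
    ∑ r ∈ Finset.Icc 1 q, f r = ∑ r ∈ Finset.range q, f r := by
  have h1 : Finset.range (q + 1) = insert 0 (Finset.Icc 1 q) := by
    ext x
    simp
    omega
  have h2 : ∑ r ∈ Finset.range (q + 1), f r = f 0 + ∑ r ∈ Finset.Icc 1 q, f r := by
    rw [h1, Finset.sum_insert (by simp)]
  rw [Finset.sum_range_succ, h] at h2
  linear_combination -h2

lemma Vloc_eC (q : ℕ) (b1 b2 : ℤ) :
    Vloc10 q b1 b2 = ∑ r ∈ Finset.Icc 1 q, eC q (b2 * r ^ 2 + b1 * r) := rfl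

lemma Vloc_range (q : ℕ) (b1 b2 : ℤ) :
    Vloc10 q b1 b2 = ∑ r ∈ Finset.range q, eC q (b2 * (r : ℤ) ^ 2 + b1 * r) := by
  rw [Vloc_eC]
  apply sum_Icc_eq_range
  have : (b2 * (q : ℤ) ^ 2 + b1 * q) = (q : ℤ) * (b2 * q + b1) := by ring
  rw [this]
  simp only [Nat.cast_zero]
  rw [eC_int_mul]
  norm_num [eC]

lemma prod_eC {α : Type*} (t : Finset α) (q : ℕ) (f : α → ℤ) :
    ∏ i ∈ t, eC q (f i) = eC q (∑ i ∈ t, f i) := by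
  classical
  induction t using Finset.induction with
  | empty => simp [eC]
  | insert _ _ h ih => rw [Finset.prod_insert h, Finset.sum_insert h, eC_add, ih]

lemma orth (q : ℕ) (hq : 0 < q) (s : ℕ) (lam : Fin s → ℤ) :
    ∑ a1 ∈ Finset.range q, ∑ a2 ∈ Finset.range q,
      ∏ i, Vloc10 q (lam i * a1) (lam i * a2)
    = (q : ℂ)^2 * (Nat.card {x : Fin s → ZMod q //
        ∑ i, (lam i : ZMod q) * (x i) ^ 2 = 0 ∧
        ∑ i, (lam i : ZMod q) * x i = 0} : ℂ) := by
  classical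
  haveI : NeZero q := ⟨hq.ne'⟩
  set A : (Fin s → ℕ) → ℤ := fun x => ∑ i, lam i * (x i : ℤ) ^ 2 with hA
  set B : (Fin s → ℕ) → ℤ := fun x => ∑ i, lam i * (x i : ℤ) with hB
  have step1 : ∀ a1 a2 : ℕ,
      ∏ i, Vloc10 q (lam i * a1) (lam i * a2)
      = ∑ x ∈ Fintype.piFinset (fun _ : Fin s => Finset.range q),
          eC q ((a2 : ℤ) * A x) * eC q ((a1 : ℤ) * B x) := by
    intro a1 a2
    have h1 : ∀ i : Fin s, Vloc10 q (lam i * a1) (lam i * a2)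
        = ∑ r ∈ Finset.range q, eC q (lam i * a2 * (r : ℤ) ^ 2 + lam i * a1 * r) := by
      intro i
      rw [Vloc_range]
    rw [Finset.prod_congr rfl (fun i _ => h1 i), Finset.prod_univ_sum]
    apply Finset.sum_congr rfl
    intro x _
    rw [prod_eC, ← eC_add]
    congr 1
    simp only [hA, hB, Finset.mul_sum, ← Finset.sum_add_distrib]
    apply Finset.sum_congr rfl
    intro i _
    ring
  simp only [step1]
  rw [Finset.sum_congr rfl (fun a1 _ => Finset.sum_comm), Finset.sum_comm]
  have step2 : ∀ x : Fin s → ℕ,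
      ∑ a1 ∈ Finset.range q, ∑ a2 ∈ Finset.range q,
        eC q ((a2 : ℤ) * A x) * eC q ((a1 : ℤ) * B x)
      = (if ((q:ℤ) ∣ A x ∧ (q:ℤ) ∣ B x) then (q : ℂ)^2 else 0) := by
    intro x
    have h1 : ∀ a1 : ℕ, ∑ a2 ∈ Finset.range q, eC q ((a2 : ℤ) * A x) * eC q ((a1 : ℤ) * B x)
        = (if (q:ℤ) ∣ A x then (q:ℂ) else 0) * eC q ((a1 : ℤ) * B x) := by
      intro a1; rw [← Finset.sum_mul, sum_eC q hq]
    simp only [h1]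
    rw [← Finset.mul_sum, sum_eC q hq]
    by_cases h2 : (q:ℤ) ∣ A x <;> by_cases h3 : (q:ℤ) ∣ B x <;> simp [h2, h3, sq]
  simp only [step2]
  rw [← Finset.sum_filter, Finset.sum_const, nsmul_eq_mul, mul_comm]
  congr 1
  have hcard : ((Fintype.piFinset (fun _ : Fin s => Finset.range q)).filter
      (fun x => (q:ℤ) ∣ A x ∧ (q:ℤ) ∣ B x)).card
      = Nat.card {x : Fin s → ZMod q //
        ∑ i, (lam i : ZMod q) * (x i) ^ 2 = 0 ∧
        ∑ i, (lam i : ZMod q) * x i = 0} := by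
    rw [Nat.card_eq_fintype_card, Fintype.card_subtype]
    apply Finset.card_bij (fun x _ => fun i => ((x i : ℕ) : ZMod q))
    · intro x hx
      simp only [Finset.mem_filter, Finset.mem_univ, true_and]
      rw [Finset.mem_filter] at hx
      obtain ⟨-, h2, h3⟩ := hx
      rw [← ZMod.intCast_zmod_eq_zero_iff_dvd] at h2 h3
      constructor
      · rw [← h2, hA]; push_cast; ring_nf
      · rw [← h3, hB]; push_cast; ring_nf
    · intro x hx y hy hxy
      rw [Finset.mem_filter, Fintype.mem_piFinset] at hx hy
      funext i
      have := congrFun hxy i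
      have hx' : x i < q := Finset.mem_range.1 (hx.1 i)
      have hy' : y i < q := Finset.mem_range.1 (hy.1 i)
      have := congrArg ZMod.val this
      rwa [ZMod.val_cast_of_lt hx', ZMod.val_cast_of_lt hy'] at this
    · intro y hy
      rw [Finset.mem_filter] at hy
      refine ⟨fun i => (y i).val, ?_, ?_⟩
      · rw [Finset.mem_filter]
        refine ⟨Fintype.mem_piFinset.2 fun i => Finset.mem_range.2 (ZMod.val_lt _), ?_, ?_⟩
        · rw [← ZMod.intCast_zmod_eq_zero_iff_dvd, hA]
          push_cast
          simp only [ZMod.natCast_val, ZMod.cast_id]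
          exact hy.2.1
        · rw [← ZMod.intCast_zmod_eq_zero_iff_dvd, hB]
          push_cast
          simp only [ZMod.natCast_val, ZMod.cast_id]
          exact hy.2.2
      · funext i
        simp [ZMod.natCast_val, ZMod.cast_id]
  exact_mod_cast hcard

lemma periodic_shift (n : ℕ) (f : ℕ → ℂ) (h : ∀ r, f (r + n) = f r) :
    ∀ m r, f (n * m + r) = f r := by
  intro m
  induction m with
  | zero => simp
  | succ j ihj =>
    intro r
    rw [Nat.mul_succ]
    rw [show n * j + n + r = (n * j + r) + n by ring, h, ihj]

lemma periodic_sum (n m : ℕ) (f : ℕ → ℂ) (h : ∀ r, f (r + n) = f r) :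
    ∑ r ∈ Finset.range (n * m), f r = m * ∑ r ∈ Finset.range n, f r := by
  induction m with
  | zero => simp
  | succ m ih =>
    rw [Nat.mul_succ, Finset.sum_range_add]
    simp only [periodic_shift n f h]
    rw [ih]
    push_cast
    ring

lemma eC_lift (p l k : ℕ) (hp : 0 < p) (hl : l ≤ k) (d : ℤ) :
    eC (p ^ k) ((p : ℤ) ^ (k - l) * d) = eC (p ^ l) d := by
  unfold eC
  congr 1
  have hpc : (p : ℂ) ≠ 0 := Nat.cast_ne_zero.2 hp.ne'
  have hk : (p : ℂ) ^ k = (p : ℂ) ^ (k - l) * (p : ℂ) ^ l := by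
    rw [← pow_add]
    congr 1
    omega
  have h1 : ((p : ℂ)) ^ (k - l) ≠ 0 := pow_ne_zero _ hpc
  have h2 : ((p : ℂ)) ^ l ≠ 0 := pow_ne_zero _ hpc
  push_cast
  rw [hk]
  field_simp

lemma Vloc_lift (p l k : ℕ) (hp : 0 < p) (hl : l ≤ k) (c1 c2 : ℤ) :
    Vloc10 (p ^ k) ((p : ℤ) ^ (k - l) * c1) ((p : ℤ) ^ (k - l) * c2)
    = (p : ℂ) ^ (k - l) * Vloc10 (p ^ l) c1 c2 := by
  rw [Vloc_range, Vloc_range]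
  have h1 : ∀ r : ℕ, eC (p ^ k) ((p : ℤ) ^ (k - l) * c2 * (r : ℤ) ^ 2 + (p : ℤ) ^ (k - l) * c1 * r)
      = eC (p ^ l) (c2 * (r : ℤ) ^ 2 + c1 * r) := by
    intro r
    rw [← eC_lift p l k hp hl (c2 * (r : ℤ) ^ 2 + c1 * r)]
    congr 1
    ring
  simp only [h1]
  have hper : ∀ r : ℕ, eC (p ^ l) (c2 * ((r + p ^ l : ℕ) : ℤ) ^ 2 + c1 * ((r + p ^ l : ℕ) : ℤ))
      = eC (p ^ l) (c2 * (r : ℤ) ^ 2 + c1 * r) := by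
    intro r
    have : (c2 * ((r + p ^ l : ℕ) : ℤ) ^ 2 + c1 * ((r + p ^ l : ℕ) : ℤ))
        = (c2 * (r : ℤ) ^ 2 + c1 * r) + ((p ^ l : ℕ) : ℤ) * (c2 * (2 * r + (p ^ l : ℕ)) + c1) := by
      push_cast
      ring
    rw [this, eC_add, eC_int_mul, mul_one]
  have hpk : p ^ k = p ^ l * p ^ (k - l) := by
    rw [← pow_add]
    congr 1
    omega
  rw [hpk, periodic_sum _ _ _ hper]
  push_cast
  ring

lemma Vloc_shift (q : ℕ) (b1 b2 t1 t2 : ℤ) :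
    Vloc10 q (b1 + q * t1) (b2 + q * t2) = Vloc10 q b1 b2 := by
  rw [Vloc_range, Vloc_range]
  apply Finset.sum_congr rfl
  intro r _
  have : ((b2 + q * t2) * (r : ℤ) ^ 2 + (b1 + q * t1) * r)
      = (b2 * (r : ℤ) ^ 2 + b1 * r) + (q : ℤ) * (t2 * r ^ 2 + t1 * r) := by ring
  rw [this, eC_add, eC_int_mul, mul_one]

lemma partition10 (p k : ℕ) (hp : p.Prime) (F : ℕ × ℕ → ℂ) :
    ∑ a ∈ Finset.Icc 1 (p ^ k) ×ˢ Finset.Icc 1 (p ^ k), F a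
    = ∑ l ∈ Finset.range (k + 1),
        ∑ b ∈ (Finset.Icc 1 (p ^ l) ×ˢ Finset.Icc 1 (p ^ l)).filter
            (fun b => Nat.gcd b.1 (Nat.gcd b.2 (p ^ l)) = 1),
          F (p ^ (k - l) * b.1, p ^ (k - l) * b.2) := by
  classical
  have hp1 : 0 < p := hp.pos
  rw [Finset.sum_sigma' (Finset.range (k + 1))
    (fun l => (Finset.Icc 1 (p ^ l) ×ˢ Finset.Icc 1 (p ^ l)).filter
      (fun b => Nat.gcd b.1 (Nat.gcd b.2 (p ^ l)) = 1))
    (fun l b => F (p ^ (k - l) * b.1, p ^ (k - l) * b.2))]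
  set T := (Finset.range (k + 1)).sigma (fun l =>
    (Finset.Icc 1 (p ^ l) ×ˢ Finset.Icc 1 (p ^ l)).filter
      (fun b => Nat.gcd b.1 (Nat.gcd b.2 (p ^ l)) = 1)) with hT
  set D : ℕ × ℕ → ℕ := fun a => Nat.gcd a.1 (Nat.gcd a.2 (p ^ k)) with hD
  have hfacts : ∀ a : ℕ × ℕ, a ∈ Finset.Icc 1 (p ^ k) ×ˢ Finset.Icc 1 (p ^ k) →
      ∃ j : ℕ, j ≤ k ∧ D a = p ^ j ∧ (D a).factorization p = j := by
    intro a ha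
    have hdvd : D a ∣ p ^ k := (Nat.gcd_dvd_right a.1 _).trans (Nat.gcd_dvd_right a.2 _)
    obtain ⟨j, hj, hdj⟩ := (Nat.dvd_prime_pow hp).1 hdvd
    refine ⟨j, hj, hdj, ?_⟩
    rw [hdj, hp.factorization_pow, Finsupp.single_eq_same]
  have key : ∀ a : ℕ × ℕ, a ∈ Finset.Icc 1 (p ^ k) ×ˢ Finset.Icc 1 (p ^ k) →
      ∀ j : ℕ, j ≤ k → D a = p ^ j →
      (1 ≤ a.1 / p ^ j ∧ a.1 / p ^ j ≤ p ^ (k - j)) ∧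
      (1 ≤ a.2 / p ^ j ∧ a.2 / p ^ j ≤ p ^ (k - j)) ∧
      Nat.gcd (a.1 / p ^ j) (Nat.gcd (a.2 / p ^ j) (p ^ (k - j))) = 1 ∧
      p ^ j * (a.1 / p ^ j) = a.1 ∧ p ^ j * (a.2 / p ^ j) = a.2 := by
    intro a ha j hj hdj
    rw [Finset.mem_product, Finset.mem_Icc, Finset.mem_Icc] at ha
    have hd1 : D a ∣ a.1 := Nat.gcd_dvd_left _ _
    have hd2 : D a ∣ a.2 := (Nat.gcd_dvd_right a.1 _).trans (Nat.gcd_dvd_left a.2 _)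
    rw [hdj] at hd1 hd2
    have hpj : 0 < p ^ j := pow_pos hp1 j
    have e1 : p ^ j * (a.1 / p ^ j) = a.1 := Nat.mul_div_cancel' hd1
    have e2 : p ^ j * (a.2 / p ^ j) = a.2 := Nat.mul_div_cancel' hd2
    have epk : p ^ k = p ^ j * p ^ (k - j) := by rw [← pow_add]; congr 1; omega
    have hb1 : 1 ≤ a.1 / p ^ j := Nat.one_le_div_iff hpj |>.2 (Nat.le_of_dvd (by omega) hd1)
    have hb2 : 1 ≤ a.2 / p ^ j := Nat.one_le_div_iff hpj |>.2 (Nat.le_of_dvd (by omega) hd2)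
    have hb1' : a.1 / p ^ j ≤ p ^ (k - j) := by
      have := Nat.div_le_div_right (c := p ^ j) ha.1.2
      rwa [epk, Nat.mul_div_cancel_left _ hpj] at this
    have hb2' : a.2 / p ^ j ≤ p ^ (k - j) := by
      have := Nat.div_le_div_right (c := p ^ j) ha.2.2
      rwa [epk, Nat.mul_div_cancel_left _ hpj] at this
    have hgcd : Nat.gcd (a.1 / p ^ j) (Nat.gcd (a.2 / p ^ j) (p ^ (k - j))) = 1 := by
      have : p ^ j * Nat.gcd (a.1 / p ^ j) (Nat.gcd (a.2 / p ^ j) (p ^ (k - j))) = p ^ j := by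
        rw [← Nat.gcd_mul_left, ← Nat.gcd_mul_left, e1, e2, ← epk]
        exact hdj
      exact Nat.eq_of_mul_eq_mul_left hpj (by rw [this, mul_one])
    exact ⟨⟨hb1, hb1'⟩, ⟨hb2, hb2'⟩, hgcd, e1, e2⟩
  apply Finset.sum_nbij' (i := fun a =>
      (⟨k - (D a).factorization p, (a.1 / p ^ ((D a).factorization p), a.2 / p ^ ((D a).factorization p))⟩ : Σ _ : ℕ, ℕ × ℕ))
    (j := fun x => (p ^ (k - x.1) * x.2.1, p ^ (k - x.1) * x.2.2))
  · intro a ha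
    obtain ⟨j, hj, hdj, hfa⟩ := hfacts a ha
    obtain ⟨⟨hb1, hb1'⟩, ⟨hb2, hb2'⟩, hgcd, e1, e2⟩ := key a ha j hj hdj
    rw [hT, Finset.mem_sigma]
    rw [hfa]
    have hkkj : k - (k - j) = j := by omega
    constructor
    · simp
    · rw [Finset.mem_filter, Finset.mem_product, Finset.mem_Icc, Finset.mem_Icc]
      dsimp only
      exact ⟨⟨⟨hb1, hb1'⟩, hb2, hb2'⟩, hgcd⟩
  · rintro ⟨l, b1, b2⟩ hb
    simp only [hT, Finset.mem_sigma, Finset.mem_range, Finset.mem_filter, Finset.mem_product,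
      Finset.mem_Icc] at hb
    obtain ⟨hl, ⟨⟨hb11, hb12⟩, hb21, hb22⟩, hgcd⟩ := hb
    have hl' : l ≤ k := by omega
    have hpkl : 0 < p ^ (k - l) := pow_pos hp1 _
    have epk : p ^ k = p ^ (k - l) * p ^ l := by rw [← pow_add]; congr 1; omega
    rw [Finset.mem_product, Finset.mem_Icc, Finset.mem_Icc]
    refine ⟨⟨Nat.mul_pos hpkl hb11, ?_⟩, Nat.mul_pos hpkl hb21, ?_⟩
    · rw [epk]; exact Nat.mul_le_mul_left _ hb12
    · rw [epk]; exact Nat.mul_le_mul_left _ hb22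
  · intro a ha
    obtain ⟨j, hj, hdj, hfa⟩ := hfacts a ha
    obtain ⟨_, _, _, e1, e2⟩ := key a ha j hj hdj
    rw [hfa]
    have hkkj : k - (k - j) = j := by omega
    dsimp only
    simp only [hkkj]
    rw [e1, e2]
  · rintro ⟨l, b1, b2⟩ hb
    simp only [hT, Finset.mem_sigma, Finset.mem_range, Finset.mem_filter, Finset.mem_product,
      Finset.mem_Icc] at hb
    obtain ⟨hl, ⟨⟨hb11, hb12⟩, hb21, hb22⟩, hgcd⟩ := hb
    have hl' : l ≤ k := by omega
    have hpkl : 0 < p ^ (k - l) := pow_pos hp1 _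
    have epk : p ^ k = p ^ (k - l) * p ^ l := by rw [← pow_add]; congr 1; omega
    have hdval : D (p ^ (k - l) * b1, p ^ (k - l) * b2) = p ^ (k - l) := by
      show Nat.gcd (p ^ (k - l) * b1) (Nat.gcd (p ^ (k - l) * b2) (p ^ k)) = p ^ (k - l)
      rw [epk, Nat.gcd_mul_left, Nat.gcd_mul_left, hgcd, mul_one]
    have hfac : (D (p ^ (k - l) * b1, p ^ (k - l) * b2)).factorization p = k - l := by
      rw [hdval, hp.factorization_pow, Finsupp.single_eq_same]
    dsimp only
    simp only [hfac]
    have h1 : k - (k - l) = l := by omega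
    rw [h1, Nat.mul_div_cancel_left _ hpkl, Nat.mul_div_cancel_left _ hpkl]
  · intro a ha
    obtain ⟨j, hj, hdj, hfa⟩ := hfacts a ha
    obtain ⟨_, _, _, e1, e2⟩ := key a ha j hj hdj
    rw [hfa]
    have hkkj : k - (k - j) = j := by omega
    dsimp only
    simp only [hkkj]
    rw [e1, e2]

theorem stmt_10 (p : ℕ) (hp : p.Prime) (s : ℕ) (hs : 3 ≤ s)
    (lam : Fin s → ℤ) (hlam : ∀ i, lam i ≠ 0) (k : ℕ) :
    ∑ l ∈ Finset.range (k + 1), Vnorm10 s lam (p ^ l) =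
      (p : ℂ) ^ (((2 : ℤ) - s) * k) *
        (Nat.card {x : Fin s → ZMod (p ^ k) //
          ∑ i, (lam i : ZMod (p ^ k)) * (x i) ^ 2 = 0 ∧
          ∑ i, (lam i : ZMod (p ^ k)) * x i = 0} : ℂ) := by
  classical
  have hp1 : 0 < p := hp.pos
  have hq : 0 < p ^ k := pow_pos hp1 _
  have hpc : (p : ℂ) ≠ 0 := Nat.cast_ne_zero.2 hp1.ne'
  set N : ℂ := (Nat.card {x : Fin s → ZMod (p ^ k) //
          ∑ i, (lam i : ZMod (p ^ k)) * (x i) ^ 2 = 0 ∧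
          ∑ i, (lam i : ZMod (p ^ k)) * x i = 0} : ℂ) with hN
  -- step 3 : partitioned sum equals p^(ks) * Σ Vnorm
  have step3 : ∀ l ∈ Finset.range (k + 1),
      ∑ b ∈ (Finset.Icc 1 (p ^ l) ×ˢ Finset.Icc 1 (p ^ l)).filter
          (fun b => Nat.gcd b.1 (Nat.gcd b.2 (p ^ l)) = 1),
        ∏ i, Vloc10 (p ^ k) (lam i * ((p ^ (k - l) * b.1 : ℕ) : ℤ))
          (lam i * ((p ^ (k - l) * b.2 : ℕ) : ℤ))
      = (p : ℂ) ^ (k * s) * Vnorm10 s lam (p ^ l) := by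
    intro l hl
    have hlk : l ≤ k := by
      rw [Finset.mem_range] at hl; omega
    have hinner : ∀ b : ℕ × ℕ,
        ∏ i, Vloc10 (p ^ k) (lam i * ((p ^ (k - l) * b.1 : ℕ) : ℤ))
          (lam i * ((p ^ (k - l) * b.2 : ℕ) : ℤ))
        = (p : ℂ) ^ ((k - l) * s) * ∏ i, Vloc10 (p ^ l) (lam i * b.1) (lam i * b.2) := by
      intro b
      have h1 : ∀ i : Fin s, Vloc10 (p ^ k) (lam i * ((p ^ (k - l) * b.1 : ℕ) : ℤ))
          (lam i * ((p ^ (k - l) * b.2 : ℕ) : ℤ))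
          = (p : ℂ) ^ (k - l) * Vloc10 (p ^ l) (lam i * b.1) (lam i * b.2) := by
        intro i
        have := Vloc_lift p l k hp1 hlk (lam i * b.1) (lam i * b.2)
        rw [← this]
        congr 1 <;> push_cast <;> ring
      rw [Finset.prod_congr rfl (fun i _ => h1 i), Finset.prod_mul_distrib,
        Finset.prod_const, Finset.card_univ, Fintype.card_fin, ← pow_mul]
    rw [Finset.sum_congr rfl (fun b _ => hinner b), ← Finset.mul_sum]
    rw [Vnorm10]
    have hppl : ((p ^ l : ℕ) : ℂ) = (p : ℂ) ^ l := by push_cast; rfl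
    rw [hppl, ← mul_assoc]
    congr 1
    have hks : k * s = (k - l) * s + l * s := by
      rw [← add_mul, Nat.sub_add_cancel hlk]
    have hinv : ((p : ℂ) ^ l) ^ (-(s : ℤ)) = ((p : ℂ) ^ (l * s))⁻¹ := by
      rw [zpow_neg, zpow_natCast, ← pow_mul]
    rw [hinv, hks, pow_add]
    have hne : ((p : ℂ) ^ (l * s)) ≠ 0 := pow_ne_zero _ hpc
    field_simp
  -- main identity: complete sum = p^(ks) * Σ Vnorm
  have main : ∑ a ∈ Finset.Icc 1 (p ^ k) ×ˢ Finset.Icc 1 (p ^ k),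
      (∏ i, Vloc10 (p ^ k) (lam i * a.1) (lam i * a.2))
      = (p : ℂ) ^ (k * s) * ∑ l ∈ Finset.range (k + 1), Vnorm10 s lam (p ^ l) := by
    rw [partition10 p k hp (fun a => ∏ i, Vloc10 (p ^ k) (lam i * a.1) (lam i * a.2))]
    rw [Finset.sum_congr rfl step3, ← Finset.mul_sum]
  -- orthogonality side
  have hshift1 : ∀ (m : ℤ) (c : ℤ), Vloc10 (p ^ k) (m * ((p ^ k : ℕ) : ℤ)) c = Vloc10 (p ^ k) 0 c := by
    intro m c
    have := Vloc_shift (p ^ k) 0 c m 0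
    simp only [zero_add, mul_zero, add_zero] at this
    rw [← this]
    congr 1
    ring
  have hshift2 : ∀ (b : ℤ) (m : ℤ), Vloc10 (p ^ k) b (m * ((p ^ k : ℕ) : ℤ)) = Vloc10 (p ^ k) b 0 := by
    intro b m
    have := Vloc_shift (p ^ k) b 0 0 m
    simp only [zero_add, mul_zero, add_zero] at this
    rw [← this]
    congr 1
    ring
  have horth : ∑ a ∈ Finset.Icc 1 (p ^ k) ×ˢ Finset.Icc 1 (p ^ k),
      (∏ i, Vloc10 (p ^ k) (lam i * a.1) (lam i * a.2))
      = ((p ^ k : ℕ) : ℂ) ^ 2 * N := by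
    rw [Finset.sum_product]
    rw [sum_Icc_eq_range (p ^ k) _ (by
      apply Finset.sum_congr rfl
      intro a2 _
      apply Finset.prod_congr rfl
      intro i _
      rw [show (lam i * ((p ^ k : ℕ) : ℤ)) = lam i * ((p ^ k : ℕ) : ℤ) from rfl]
      rw [hshift1 (lam i)]
      norm_num)]
    rw [Finset.sum_congr rfl (fun a1 _ => sum_Icc_eq_range (p ^ k) _ (by
      apply Finset.prod_congr rfl
      intro i _
      rw [hshift2 _ (lam i)]
      norm_num))]
    rw [hN]
    exact orth (p ^ k) hq s lam
  rw [main] at horth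
  -- final algebra
  have hpow2 : ((p ^ k : ℕ) : ℂ) ^ 2 = (p : ℂ) ^ (2 * k) := by
    push_cast
    rw [← pow_mul]
    ring_nf
  rw [hpow2] at horth
  have hzp : (p : ℂ) ^ (((2 : ℤ) - s) * k) = (p : ℂ) ^ (2 * k) / (p : ℂ) ^ (k * s) := by
    rw [show ((2 : ℤ) - s) * k = ((2 * k : ℕ) : ℤ) - ((k * s : ℕ) : ℤ) by push_cast; ring]
    rw [zpow_sub₀ hpc, zpow_natCast, zpow_natCast]
  rw [hzp]
  have hne : (p : ℂ) ^ (k * s) ≠ 0 := pow_ne_zero _ hpc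
  field_simp
  linear_combination horth
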